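/- arXiv:2107.03494 — 2 statements merged into one kernel-verified Lean document; each statement's English description precedes it below -/
import Mathlib

section
/- Let β* ∈ ℝ^D with support N* = {ℓ : β*_ℓ ≠ 0} of size s₀, and let m* = min_{ℓ∈N*} |β*_ℓ|. Let β̃ be a random vector in ℝ^D whose entries satisfy the sub-Gaussian residual tail condition P(|β̃_ℓ − β*_ℓ| > t) ≤ 2exp(−n t²/(2σ²)) for all t > 0 and all ℓ ∈ [D]. Let HT_γ be the hard-thresholding operator, HT_γ(x)_ℓ = x_ℓ·1{|x_ℓ| > γ}, and let β̂^{ew-orc} be the entrywise oracle given by β̂^{ew-orc}_ℓ = β̃_ℓ for ℓ ∈ N* and β̂^{ew-orc}_ℓ = 0 for ℓ ∉ N*. Then, for any γ > 0, P(HT_γ(β̃) ≠ β̂^{ew-orc}) ≤ 2s₀·exp(−n·[m* − γ]_+²/(2σ²)) + 2(D − s₀)·exp(−n γ²/(2σ²)). -/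
open scoped BigOperators
open Matrix

namespace FCLS

/-- Edge index: pairs `(i, j)` with `i < j`. -/
abbrev EdgeIdx (d : ℕ) := {p : Fin d × Fin d // p.1 < p.2}

/-- Hollow symmetric adjacency matrix attached to an edge vector. -/
def adjM {d : ℕ} (x : EdgeIdx d → ℝ) : Matrix (Fin d) (Fin d) ℝ :=
  Matrix.of fun i j =>
    if h : i < j then x ⟨(i, j), h⟩ else if h' : j < i then x ⟨(j, i), h'⟩ else 0

/-- Graph Laplacian of a square matrix. -/
def lapM {n : Type*} [Fintype n] [DecidableEq n] (A : Matrix n n ℝ) : Matrix n n ℝ :=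
  Matrix.diagonal (fun i => ∑ j, A i j) - A

/-- Graph Laplacian of an edge vector. -/
def lap {d : ℕ} (x : EdgeIdx d → ℝ) : Matrix (Fin d) (Fin d) ℝ := lapM (adjM x)

/-- Eigenvalues sorted in nondecreasing order (`0` when not Hermitian). -/
noncomputable def eigs {n : Type*} [Fintype n] [DecidableEq n] (A : Matrix n n ℝ) :
    Fin (Fintype.card n) → ℝ :=
  if hA : A.IsHermitian then
    (fun v : Fin (Fintype.card n) → ℝ => v ∘ Tuple.sort v)
      (hA.eigenvalues ∘ (Fintype.equivFin n).symm)
  else 0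

/-- `j`-th smallest eigenvalue, `1`-indexed. -/
noncomputable def eigAsc {n : Type*} [Fintype n] [DecidableEq n] (A : Matrix n n ℝ) (j : ℕ) : ℝ :=
  if h : j - 1 < Fintype.card n then eigs A ⟨j - 1, h⟩ else 0

/-- Laplacian coefficient `ℳ(V, w)`. -/
def lapCoeff {d K : ℕ} (V : Matrix (Fin d) (Fin K) ℝ) (w : Fin K → ℝ) : EdgeIdx d → ℝ :=
  fun e => ∑ k, w k * (V e.1.1 k - V e.1.2 k) ^ 2

/-- Support graph of an edge vector. -/
def suppGraph {d : ℕ} (x : EdgeIdx d → ℝ) : SimpleGraph (Fin d) :=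
  SimpleGraph.fromRel fun i j => ∃ h : i < j, x ⟨(i, j), h⟩ ≠ 0

/-- Support graph of a square matrix. -/
def suppGraphM {d : ℕ} (A : Matrix (Fin d) (Fin d) ℝ) : SimpleGraph (Fin d) :=
  SimpleGraph.fromRel fun i j => A i j ≠ 0

/-- Block support: edges whose endpoints lie in a common connected component
of the support graph. -/
def blockSupp {d : ℕ} (x : EdgeIdx d → ℝ) : Set (EdgeIdx d) :=
  {e | (suppGraph x).Reachable e.1.1 e.1.2}

/-- Number of vertices in the connected component of `i`. -/
noncomputable def compCard {d : ℕ} (G : SimpleGraph (Fin d)) (i : Fin d) : ℕ :=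
  Nat.card {j : Fin d // G.Reachable i j}

/-- Largest connected-component size. -/
noncomputable def maxCompCard {d : ℕ} (G : SimpleGraph (Fin d)) : ℕ :=
  Finset.univ.sup fun i => compCard G i

/-- Number of connected components. -/
noncomputable def numComp {d : ℕ} (G : SimpleGraph (Fin d)) : ℕ :=
  Nat.card G.ConnectedComponent

open Classical in
/-- Restriction of an edge vector to edges inside a vertex set. -/
noncomputable def restrictE {d : ℕ} (x : EdgeIdx d → ℝ) (S : Set (Fin d)) : EdgeIdx d → ℝ :=
  fun e => if e.1.1 ∈ S ∧ e.1.2 ∈ S then x e else 0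

/-- `j`-th smallest eigenvalue (1-indexed) of the Laplacian of the adjacency
submatrix on the vertex set `S`. -/
noncomputable def subLapEig {d : ℕ} (x : EdgeIdx d → ℝ) (S : Set (Fin d)) (j : ℕ) : ℝ :=
  letI : Fintype S := Fintype.ofFinite S
  eigAsc (lapM ((adjM x).submatrix (fun a : S => (a : Fin d)) fun a : S => (a : Fin d))) j

/-- Spectral (`ℓ2 → ℓ2` operator) norm of a matrix. -/
noncomputable def opNorm {m n : Type*} [Fintype m] [Fintype n] [DecidableEq n]
    (A : Matrix m n ℝ) : ℝ :=
  ‖LinearMap.toContinuousLinearMap (Matrix.toEuclideanLin A)‖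

/-- Entrywise `ℓ1` norm of a matrix. -/
noncomputable def matL1 {m n : Type*} [Fintype m] [Fintype n] (A : Matrix m n ℝ) : ℝ :=
  ∑ i, ∑ j, |A i j|

/-- Frobenius norm of a matrix. -/
noncomputable def frob {m n : Type*} [Fintype m] [Fintype n] (A : Matrix m n ℝ) : ℝ :=
  Real.sqrt (∑ i, ∑ j, A i j ^ 2)

/-- `ℓ1 → ℓ1` operator norm: maximal absolute row sum. -/
noncomputable def opOne {m n : Type*} [Fintype m] [Fintype n] (A : Matrix m n ℝ) : ℝ :=
  ⨆ i, ∑ j, |A i j|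

/-- `ℓ2 → ℓ∞` operator norm: maximal Euclidean row norm. -/
noncomputable def twoInf {m n : Type*} [Fintype m] [Fintype n] (A : Matrix m n ℝ) : ℝ :=
  ⨆ i, Real.sqrt (∑ j, A i j ^ 2)

/-- Max (absolute) entry of a vector. -/
noncomputable def vecMax {ι : Type*} [Fintype ι] (v : ι → ℝ) : ℝ := ⨆ i, |v i|

/-- `ℓ1` norm of a vector. -/
noncomputable def l1 {ι : Type*} [Fintype ι] (v : ι → ℝ) : ℝ := ∑ i, |v i|

/-- `ℓ2` norm of a vector. -/
noncomputable def l2 {ι : Type*} [Fintype ι] (v : ι → ℝ) : ℝ := Real.sqrt (∑ i, v i ^ 2)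

/-- SCAD-like folded concave penalty `g` with (within-domain) derivative `g'`. -/
structure SCADLike (g g' : ℝ → ℝ) (a0 a1 b1 b2 τ : ℝ) : Prop where
  a1_le_a0 : a1 ≤ a0
  a1_pos : 0 < a1
  b1_pos : 0 < b1
  b1_lt_b2 : b1 < b2
  map_zero : g 0 = 0
  mono : MonotoneOn g (Set.Ici 0)
  concave : ConcaveOn ℝ (Set.Ici 0) g
  hasDeriv : ∀ t ∈ Set.Ici (0 : ℝ), HasDerivWithinAt g (g' t) (Set.Ici 0) t
  deriv_zero : g' 0 = a0 * τ
  deriv_low : ∀ t : ℝ, 0 < t → t ≤ b1 * τ → a1 * τ ≤ g' t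
  deriv_high : ∀ t : ℝ, b2 * τ ≤ t → g' t = 0

/-- `(V, lam)` is an orthonormal eigendecomposition of `A`. -/
def IsEigenDecomp {d : ℕ} (A V : Matrix (Fin d) (Fin d) ℝ) (lam : Fin d → ℝ) : Prop :=
  Vᵀ * V = 1 ∧ ∀ k, A *ᵥ (fun i => V i k) = lam k • fun i => V i k

/-- LLA surrogate objective with weight vector `M`. -/
noncomputable def llaObj {d : ℕ} (ℓ : (EdgeIdx d → ℝ) → ℝ) (M β : EdgeIdx d → ℝ) : ℝ :=
  ℓ β + (1 / 2) * ∑ e, M e * |β e|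

/-- `out` is the output of one LLA step from `b` (for some orthonormal
eigendecomposition of `ℒ(|b|)`). -/
def LLAStep {d : ℕ} (ℓ : (EdgeIdx d → ℝ) → ℝ) (g' : ℝ → ℝ) (b out : EdgeIdx d → ℝ) : Prop :=
  ∃ V lam, IsEigenDecomp (lap fun e => |b e|) V lam ∧
    ∀ β, llaObj ℓ (lapCoeff V fun k => g' (lam k)) out ≤
      llaObj ℓ (lapCoeff V fun k => g' (lam k)) β

/-- `β` solves the weighted Lasso block-oracle problem with weights `w`. -/
def OrcLassoSol {d : ℕ} (ℓ : (EdgeIdx d → ℝ) → ℝ) (S : Set (EdgeIdx d))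
    (w β : EdgeIdx d → ℝ) : Prop :=
  (∀ e ∉ S, β e = 0) ∧
  ∀ γ : EdgeIdx d → ℝ, (∀ e ∉ S, γ e = 0) →
    ℓ β + (1 / 2) * ∑ e, w e * |β e| ≤ ℓ γ + (1 / 2) * ∑ e, w e * |γ e|

/-- The set `T_op(ρ, τ)` of weighted-Lasso-oracle solutions with small weights. -/
def TopSet {d : ℕ} (ℓ : (EdgeIdx d → ℝ) → ℝ) (S : Set (EdgeIdx d))
    (a0 τ ρ : ℝ) : Set (EdgeIdx d → ℝ) :=
  {β | ∃ w : EdgeIdx d → ℝ, (∀ e, 0 ≤ w e) ∧ (∀ e ∉ S, w e = 0) ∧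
      (∀ e, w e ≤ 2 ^ 5 * a0 * τ * ρ ^ 2) ∧ OrcLassoSol ℓ S w β}


open MeasureTheory in
/-- closed tail bound from open tail bound, by continuity. -/
lemma tail_ge_aux {Ω : Type} [MeasurableSpace Ω] (μ : Measure Ω)
    (X : Ω → ℝ) (f : ℝ → ℝ) (hf : Continuous f)
    (hb : ∀ t : ℝ, 0 < t → μ {ω | t < |X ω|} ≤ ENNReal.ofReal (f t))
    (t0 : ℝ) (ht0 : 0 < t0) :
    μ {ω | t0 ≤ |X ω|} ≤ ENNReal.ofReal (f t0) := by
  have hseq : ∀ k : ℕ, μ {ω | t0 ≤ |X ω|} ≤ ENNReal.ofReal (f (t0 - t0 / (k + 2))) := by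
    intro k
    have h2 : (0:ℝ) < (k:ℝ) + 2 := by positivity
    have hlt : t0 / ((k:ℝ) + 2) < t0 := by
      rw [div_lt_iff₀ h2]; nlinarith
    have hpos : 0 < t0 - t0 / ((k:ℝ) + 2) := by linarith
    refine le_trans (measure_mono ?_) (hb _ hpos)
    intro ω hω
    simp only [Set.mem_setOf_eq] at hω ⊢
    have hdp : 0 < t0 / ((k:ℝ) + 2) := by positivity
    linarith
  have h0 : Filter.Tendsto (fun k : ℕ => t0 - t0 / ((k:ℝ) + 2)) Filter.atTop (nhds t0) := by
    have h1 : Filter.Tendsto (fun k : ℕ => t0 / ((k:ℝ) + 2)) Filter.atTop (nhds 0) := by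
      have hA : Filter.Tendsto (fun k : ℕ => (k:ℝ) + 2) Filter.atTop Filter.atTop :=
        Filter.tendsto_atTop_add_const_right _ 2 tendsto_natCast_atTop_atTop
      exact Filter.Tendsto.div_atTop tendsto_const_nhds hA
    simpa using Filter.Tendsto.const_sub t0 h1
  have hlim : Filter.Tendsto (fun k : ℕ => ENNReal.ofReal (f (t0 - t0 / ((k:ℝ) + 2))))
      Filter.atTop (nhds (ENNReal.ofReal (f t0))) :=
    (ENNReal.continuous_ofReal.tendsto _).comp ((hf.tendsto _).comp h0)
  exact ge_of_tendsto' hlim hseq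

open MeasureTheory in
/-- with high probability, hard thresholding recovers the entrywise
oracle estimator. -/
theorem stmt_16 {D : ℕ}
    (Ω : Type) [MeasurableSpace Ω] (μ : Measure Ω) [IsProbabilityMeasure μ]
    (n : ℕ) (hn : 0 < n) (σ : ℝ) (hσ : 0 < σ)
    (βstar : Fin D → ℝ)
    (s0 : ℕ) (hs0 : s0 = Nat.card {ℓ : Fin D // βstar ℓ ≠ 0})
    (mstar : ℝ) (hmstar : mstar = ⨅ ℓ : {ℓ : Fin D // βstar ℓ ≠ 0}, |βstar ℓ.1|)
    (βtil : Ω → Fin D → ℝ)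
    (htail : ∀ (ℓ : Fin D) (t : ℝ), 0 < t →
      μ {ω | t < |βtil ω ℓ - βstar ℓ|}
        ≤ ENNReal.ofReal (2 * Real.exp (-(n * t ^ 2) / (2 * σ ^ 2))))
    (γ : ℝ) (hγ : 0 < γ) :
    μ {ω | (fun ℓ => if γ < |βtil ω ℓ| then βtil ω ℓ else 0)
          ≠ (fun ℓ => if βstar ℓ ≠ 0 then βtil ω ℓ else 0)}
      ≤ ENNReal.ofReal
          (2 * s0 * Real.exp (-(n * (max (mstar - γ) 0) ^ 2) / (2 * σ ^ 2))
            + 2 * ((D : ℝ) - s0) * Real.exp (-(n * γ ^ 2) / (2 * σ ^ 2))) := by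
  classical
  set E1 : ℝ := Real.exp (-(n * (max (mstar - γ) 0) ^ 2) / (2 * σ ^ 2)) with hE1
  set E2 : ℝ := Real.exp (-(n * γ ^ 2) / (2 * σ ^ 2)) with hE2
  set b1 : ENNReal := ENNReal.ofReal (2 * E1) with hb1def
  set b2 : ENNReal := ENNReal.ofReal (2 * E2) with hb2def
  have hm : ∀ ℓ : Fin D, βstar ℓ ≠ 0 → mstar ≤ |βstar ℓ| := by
    intro ℓ h
    rw [hmstar]
    haveI : Nonempty {ℓ : Fin D // βstar ℓ ≠ 0} := ⟨⟨ℓ, h⟩⟩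
    exact ciInf_le (Set.Finite.bddBelow (Set.finite_range _)) (⟨ℓ, h⟩ : {ℓ : Fin D // βstar ℓ ≠ 0})
  set A : Fin D → Set Ω := fun ℓ =>
    if βstar ℓ ≠ 0 then {ω | max (mstar - γ) 0 ≤ |βtil ω ℓ - βstar ℓ|}
    else {ω | γ < |βtil ω ℓ - βstar ℓ|} with hA
  have hsub : {ω | (fun ℓ => if γ < |βtil ω ℓ| then βtil ω ℓ else 0)
          ≠ (fun ℓ => if βstar ℓ ≠ 0 then βtil ω ℓ else 0)} ⊆ ⋃ ℓ, A ℓ := by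
    intro ω hω
    simp only [Set.mem_setOf_eq] at hω
    have hex : ∃ ℓ, (if γ < |βtil ω ℓ| then βtil ω ℓ else 0)
        ≠ (if βstar ℓ ≠ 0 then βtil ω ℓ else 0) := by
      by_contra hc; push_neg at hc; exact hω (funext hc)
    obtain ⟨ℓ, hne⟩ := hex
    refine Set.mem_iUnion.mpr ⟨ℓ, ?_⟩
    by_cases h : βstar ℓ = 0
    · simp only [h, ne_eq, not_true_eq_false, if_false] at hne
      by_cases hγ' : γ < |βtil ω ℓ|
      · simp only [hA, h, ne_eq, not_true_eq_false, if_false, Set.mem_setOf_eq]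
        simpa [h] using hγ'
      · simp [hγ'] at hne
    · simp only [h, ne_eq, not_false_eq_true, if_true] at hne
      by_cases hγ' : γ < |βtil ω ℓ|
      · simp [hγ'] at hne
      · simp only [hγ', if_false] at hne
        have hle : |βtil ω ℓ| ≤ γ := le_of_not_gt hγ'
        simp only [hA, h, ne_eq, not_false_eq_true, if_true, Set.mem_setOf_eq]
        have h1 : mstar ≤ |βstar ℓ| := hm ℓ h
        have h2 : |βstar ℓ| - |βtil ω ℓ| ≤ |βstar ℓ - βtil ω ℓ| :=
          abs_sub_abs_le_abs_sub _ _
        have h3 : |βstar ℓ - βtil ω ℓ| = |βtil ω ℓ - βstar ℓ| := abs_sub_comm _ _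
        have h4 : 0 ≤ |βtil ω ℓ - βstar ℓ| := abs_nonneg _
        refine max_le ?_ h4
        linarith [h2, h3 ▸ h2]
  have hbound : ∀ ℓ, μ (A ℓ) ≤ if βstar ℓ ≠ 0 then b1 else b2 := by
    intro ℓ
    by_cases h : βstar ℓ = 0
    · have hAe : A ℓ = {ω | γ < |βtil ω ℓ - βstar ℓ|} := by
        simp only [hA]; rw [if_neg (not_not_intro h)]
      rw [hAe, if_neg (not_not_intro h), hb2def, hE2]
      exact htail ℓ γ hγ
    · simp only [hA, h, ne_eq, not_false_eq_true, if_true]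
      rcases (le_max_right (mstar - γ) 0).eq_or_lt with h0 | hpos
      · have hE : (2:ℝ) * E1 = 2 := by
          rw [hE1, ← h0]; norm_num
        have h1 : μ {ω | max (mstar - γ) 0 ≤ |βtil ω ℓ - βstar ℓ|} ≤ 1 := prob_le_one
        refine h1.trans ?_
        rw [hb1def, hE]
        exact ENNReal.one_le_ofReal.mpr (by norm_num)
      · refine tail_ge_aux μ (fun ω => βtil ω ℓ - βstar ℓ)
          (fun t => 2 * Real.exp (-(n * t ^ 2) / (2 * σ ^ 2))) ?_
          (fun t ht => htail ℓ t ht) _ hpos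
        fun_prop
  -- cardinality facts
  have hs0' : (Finset.univ.filter fun ℓ : Fin D => βstar ℓ ≠ 0).card = s0 := by
    rw [hs0, Nat.card_eq_fintype_card, Fintype.card_subtype]
  have hcards : (Finset.univ.filter fun ℓ : Fin D => βstar ℓ ≠ 0).card
      + (Finset.univ.filter fun ℓ : Fin D => ¬ βstar ℓ ≠ 0).card = D := by
    rw [Finset.card_filter_add_card_filter_not]; simp
  have hs0le : s0 ≤ D := by omega
  have hcard2 : (Finset.univ.filter fun ℓ : Fin D => ¬ βstar ℓ ≠ 0).card = D - s0 := by omega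
  have hE1nn : 0 ≤ E1 := Real.exp_nonneg _
  have hE2nn : 0 ≤ E2 := Real.exp_nonneg _
  calc μ {ω | (fun ℓ => if γ < |βtil ω ℓ| then βtil ω ℓ else 0)
          ≠ (fun ℓ => if βstar ℓ ≠ 0 then βtil ω ℓ else 0)}
      ≤ μ (⋃ ℓ, A ℓ) := measure_mono hsub
    _ ≤ ∑' ℓ, μ (A ℓ) := measure_iUnion_le A
    _ = ∑ ℓ, μ (A ℓ) := tsum_fintype _
    _ ≤ ∑ ℓ, (if βstar ℓ ≠ 0 then b1 else b2) :=
        Finset.sum_le_sum fun ℓ _ => hbound ℓ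
    _ = (s0 : ENNReal) * b1 + ((D - s0 : ℕ) : ENNReal) * b2 := by
        rw [Finset.sum_ite, Finset.sum_const, Finset.sum_const, hs0', hcard2,
          nsmul_eq_mul, nsmul_eq_mul]
    _ = ENNReal.ofReal (2 * s0 * E1 + 2 * ((D : ℝ) - s0) * E2) := by
        have hDd : ((D - s0 : ℕ) : ℝ) = (D : ℝ) - s0 := by
          push_cast [Nat.cast_sub hs0le]; ring
        have hDge : (0:ℝ) ≤ (D : ℝ) - s0 := sub_nonneg.mpr (by exact_mod_cast hs0le)
        have d1 : (s0 : ENNReal) * b1 = ENNReal.ofReal (2 * s0 * E1) := by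
          rw [hb1def, ← ENNReal.ofReal_natCast s0, ← ENNReal.ofReal_mul (Nat.cast_nonneg _)]
          exact congrArg ENNReal.ofReal (by ring)
        have d2 : ((D - s0 : ℕ) : ENNReal) * b2 = ENNReal.ofReal (2 * ((D : ℝ) - s0) * E2) := by
          rw [hb2def, ← ENNReal.ofReal_natCast (D - s0), ← ENNReal.ofReal_mul (Nat.cast_nonneg _)]
          exact congrArg ENNReal.ofReal (by rw [hDd]; ring)
        rw [d1, d2, ← ENNReal.ofReal_add (by positivity)
          (mul_nonneg (mul_nonneg (by norm_num) hDge) hE2nn)]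

end FCLS
end

section
/- Let β* ∈ ℝ^D (with D = C(d,2)) have s₀ nonzero entries and let 𝒹* be the maximal vertex degree of the support graph of 𝒜(β*). Let f: ℕ × ℝ_{>0} → ℝ_{≥0} be monotonically decreasing in both arguments and v* ∈ [0,∞), and let β̃ be a random vector in ℝ^D satisfying the residual tail condition P(|β̃_ℓ − β*_ℓ| > t) ≤ f(n, t) for every ℓ ∈ [D] and every t ∈ (0, 1/v*] (with 1/0 = +∞). Let T_γ: ℝ → ℝ be a generalized thresholding operator: |T_γ(z)| ≤ |z|, T_γ(z) = 0 whenever |z| ≤ γ, and |T_γ(z) − z| ≤ γ, for all z ∈ ℝ and γ ≥ 0 (applied entrywise to vectors). Then for any γ ∈ (0, 1/v*) and any α ∈ (0,1): (a) P(‖T_γ(β̃) − β*‖_1 > 6 s₀ γ) ≤ s₀·f(n, γ) + D·f(n, (1−α)γ); and (b) P(‖𝒜(T_γ(β̃) − β*)‖_{1→1} > 6 𝒹* γ) ≤ s₀·f(n, γ) + D·f(n, (1−α)γ). -/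
open scoped BigOperators
open Matrix

namespace FCLS

lemma card_edgeIdx' (d : ℕ) : Fintype.card (EdgeIdx d) = d.choose 2 := by
  classical
  have hb : Function.Bijective
      (fun e : EdgeIdx d => (⟨s(e.1.1, e.1.2), by
        simpa [Sym2.isDiag_iff_proj_eq] using e.2.ne⟩ :
        { a : Sym2 (Fin d) // ¬a.IsDiag })) := by
    constructor
    · rintro ⟨⟨a, b⟩, hab⟩ ⟨⟨c, e⟩, hce⟩ h
      simp only [Subtype.mk.injEq, Sym2.eq_iff] at h
      rcases h with ⟨h1, h2⟩ | ⟨h1, h2⟩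
      · simp [Prod.ext_iff, h1, h2]
      · exfalso
        subst h1; subst h2
        exact absurd (lt_trans hab hce) (lt_irrefl _)
    · rintro ⟨x, hx⟩
      induction x with
      | _ a b =>
        have hne : a ≠ b := by simpa [Sym2.isDiag_iff_proj_eq] using hx
        rcases lt_or_gt_of_ne hne with h | h
        · exact ⟨⟨(a, b), h⟩, rfl⟩
        · exact ⟨⟨(b, a), h⟩, Subtype.ext (Sym2.eq_swap)⟩
  rw [Fintype.card_of_bijective hb, Sym2.card_subtype_not_diag, Fintype.card_fin]

open MeasureTheory in
/-- error bounds after generalized thresholding of an estimator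
satisfying a residual tail condition. -/
theorem stmt_17 {d : ℕ} (hd : 2 ≤ d)
    (Ω : Type) [MeasurableSpace Ω] (μ : Measure Ω) [IsProbabilityMeasure μ]
    (n : ℕ) (hn : 0 < n)
    (βstar : EdgeIdx d → ℝ)
    (s0 : ℕ) (hs0 : s0 = Nat.card {e : EdgeIdx d // βstar e ≠ 0})
    (degmax : ℕ) (hdeg : degmax = Finset.univ.sup
      fun i : Fin d => Nat.card {j : Fin d // (suppGraph βstar).Adj i j})
    (f : ℕ → ℝ → ℝ) (hfnn : ∀ m t, 0 ≤ f m t)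
    (hfmono1 : ∀ m1 m2 : ℕ, m1 ≤ m2 → ∀ t : ℝ, 0 < t → f m2 t ≤ f m1 t)
    (hfmono2 : ∀ (m : ℕ) (t1 t2 : ℝ), 0 < t1 → t1 ≤ t2 → f m t2 ≤ f m t1)
    (vstar : ℝ) (hv : 0 ≤ vstar)
    (βtil : Ω → EdgeIdx d → ℝ)
    (htail : ∀ (e : EdgeIdx d) (t : ℝ), 0 < t → vstar * t ≤ 1 →
      μ {ω | t < |βtil ω e - βstar e|} ≤ ENNReal.ofReal (f n t))
    (T : ℝ → ℝ → ℝ)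
    (hT1 : ∀ γ z : ℝ, 0 ≤ γ → |T γ z| ≤ |z|)
    (hT2 : ∀ γ z : ℝ, 0 ≤ γ → |z| ≤ γ → T γ z = 0)
    (hT3 : ∀ γ z : ℝ, 0 ≤ γ → |T γ z - z| ≤ γ)
    (γ α : ℝ) (hγ : 0 < γ) (hγv : vstar * γ < 1) (hα0 : 0 < α) (hα1 : α < 1) :
    μ {ω | 6 * s0 * γ < ∑ e, |T γ (βtil ω e) - βstar e|}
      ≤ ENNReal.ofReal (s0 * f n γ + (d.choose 2 : ℝ) * f n ((1 - α) * γ)) ∧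
    μ {ω | 6 * degmax * γ < opOne (adjM fun e => T γ (βtil ω e) - βstar e)}
      ≤ ENNReal.ofReal (s0 * f n γ + (d.choose 2 : ℝ) * f n ((1 - α) * γ)) := by
  classical
  haveI : Nonempty (Fin d) := Fin.pos_iff_nonempty.mp (by omega)
  set S : Finset (EdgeIdx d) := Finset.univ.filter (fun e => βstar e ≠ 0) with hSdef
  have hs0card : s0 = S.card := by
    rw [hs0, Nat.card_eq_fintype_card, Fintype.card_subtype]
  have h1α : 0 < (1 - α) * γ := mul_pos (by linarith) hγ
  have h1αγ : (1 - α) * γ ≤ γ := by nlinarith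
  set G : Set Ω := {ω | ∀ e : EdgeIdx d,
      (βstar e ≠ 0 → |βtil ω e - βstar e| ≤ γ) ∧
      (βstar e = 0 → |βtil ω e - βstar e| ≤ (1 - α) * γ)} with hGdef
  -- probability of the complement of the good event
  have hprob : μ Gᶜ ≤ ENNReal.ofReal (s0 * f n γ + (d.choose 2 : ℝ) * f n ((1 - α) * γ)) := by
    have hsub : Gᶜ ⊆ (⋃ e ∈ S, {ω | γ < |βtil ω e - βstar e|}) ∪
        (⋃ e ∈ (Finset.univ : Finset (EdgeIdx d)),
          {ω | (1 - α) * γ < |βtil ω e - βstar e|}) := by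
      intro ω hω
      simp only [hGdef, Set.mem_compl_iff, Set.mem_setOf_eq, not_forall] at hω
      obtain ⟨e, he⟩ := hω
      rw [not_and_or] at he
      rcases he with he | he
      · push_neg at he
        exact Or.inl (Set.mem_biUnion (Finset.mem_filter.mpr ⟨Finset.mem_univ e, he.1⟩) he.2)
      · push_neg at he
        exact Or.inr (Set.mem_biUnion (Finset.mem_univ e) he.2)
    calc μ Gᶜ ≤ μ ((⋃ e ∈ S, {ω | γ < |βtil ω e - βstar e|}) ∪
        (⋃ e ∈ (Finset.univ : Finset (EdgeIdx d)),
          {ω | (1 - α) * γ < |βtil ω e - βstar e|})) := measure_mono hsub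
      _ ≤ (∑ e ∈ S, μ {ω | γ < |βtil ω e - βstar e|}) +
          ∑ e : EdgeIdx d, μ {ω | (1 - α) * γ < |βtil ω e - βstar e|} :=
        le_trans (measure_union_le _ _)
          (add_le_add (measure_biUnion_finset_le _ _) (measure_biUnion_finset_le _ _))
      _ ≤ (∑ _e ∈ S, ENNReal.ofReal (f n γ)) +
          ∑ _e : EdgeIdx d, ENNReal.ofReal (f n ((1 - α) * γ)) := by
        gcongr with e he e he
        · exact htail e γ hγ hγv.le
        · exact htail e _ h1α (le_trans (mul_le_mul_of_nonneg_left h1αγ hv) hγv.le)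
      _ = ENNReal.ofReal (s0 * f n γ + (d.choose 2 : ℝ) * f n ((1 - α) * γ)) := by
        rw [Finset.sum_const, Finset.sum_const, Finset.card_univ, card_edgeIdx',
          nsmul_eq_mul, nsmul_eq_mul, ← hs0card,
          ENNReal.ofReal_add (mul_nonneg (Nat.cast_nonneg _) (hfnn _ _))
            (mul_nonneg (Nat.cast_nonneg _) (hfnn _ _)),
          ENNReal.ofReal_mul (Nat.cast_nonneg _), ENNReal.ofReal_mul (Nat.cast_nonneg _),
          ENNReal.ofReal_natCast, ENNReal.ofReal_natCast]
  -- pointwise bounds on the good event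
  have habs : ∀ ω ∈ G, ∀ e : EdgeIdx d,
      |T γ (βtil ω e) - βstar e| ≤ if βstar e ≠ 0 then 2 * γ else 0 := by
    intro ω hω e
    by_cases h : βstar e = 0
    · have hb : |βtil ω e| ≤ γ := by
        have := (hω e).2 h
        rw [h, sub_zero] at this
        exact le_trans this h1αγ
      rw [if_neg (by simp [h]), hT2 γ _ hγ.le hb, h, sub_zero, abs_zero]
    · rw [if_pos h]
      calc |T γ (βtil ω e) - βstar e|
          ≤ |T γ (βtil ω e) - βtil ω e| + |βtil ω e - βstar e| := abs_sub_le _ _ _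
        _ ≤ γ + γ := add_le_add (hT3 γ _ hγ.le) ((hω e).1 h)
        _ = 2 * γ := by ring
  have hx0 : ∀ ω ∈ G, ∀ e : EdgeIdx d, βstar e = 0 → T γ (βtil ω e) - βstar e = 0 := by
    intro ω hω e h
    have := habs ω hω e
    rw [if_neg (by simp [h])] at this
    exact abs_nonpos_iff.mp this
  have hx2 : ∀ ω ∈ G, ∀ e : EdgeIdx d, |T γ (βtil ω e) - βstar e| ≤ 2 * γ := by
    intro ω hω e
    refine le_trans (habs ω hω e) ?_
    split <;> [exact le_refl _; positivity]
  -- part (a) deterministic bound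
  have hkey1 : ∀ ω ∈ G, ∑ e : EdgeIdx d, |T γ (βtil ω e) - βstar e| ≤ 6 * s0 * γ := by
    intro ω hω
    calc ∑ e : EdgeIdx d, |T γ (βtil ω e) - βstar e|
        ≤ ∑ e : EdgeIdx d, if βstar e ≠ 0 then 2 * γ else 0 :=
          Finset.sum_le_sum fun e _ => habs ω hω e
      _ = ∑ _e ∈ S, 2 * γ := (Finset.sum_filter _ _).symm
      _ = (s0 : ℝ) * (2 * γ) := by rw [Finset.sum_const, nsmul_eq_mul, hs0card]
      _ ≤ 6 * s0 * γ := by nlinarith [Nat.cast_nonneg (α := ℝ) s0, hγ.le]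
  -- part (b) deterministic bound
  have hkey2 : ∀ ω ∈ G,
      opOne (adjM fun e => T γ (βtil ω e) - βstar e) ≤ 6 * degmax * γ := by
    intro ω hω
    set x : EdgeIdx d → ℝ := fun e => T γ (βtil ω e) - βstar e with hxdef
    have hent : ∀ i j : Fin d,
        |adjM x i j| ≤ if (suppGraph βstar).Adj i j then 2 * γ else 0 := by
      intro i j
      have hAdj : ∀ (h : i < j), ¬ (suppGraph βstar).Adj i j → βstar ⟨(i, j), h⟩ = 0 := by
        intro h hna
        by_contra hc
        exact hna (by
          simp only [suppGraph, SimpleGraph.fromRel_adj]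
          exact ⟨h.ne, Or.inl ⟨h, hc⟩⟩)
      have hAdj' : ∀ (h : j < i), ¬ (suppGraph βstar).Adj i j → βstar ⟨(j, i), h⟩ = 0 := by
        intro h hna
        by_contra hc
        exact hna (by
          simp only [suppGraph, SimpleGraph.fromRel_adj]
          exact ⟨h.ne', Or.inr ⟨h, hc⟩⟩)
      by_cases hadj : (suppGraph βstar).Adj i j
      · rw [if_pos hadj]
        simp only [adjM, Matrix.of_apply]
        split
        · exact hx2 ω hω _
        · split
          · exact hx2 ω hω _
          · simpa using by positivity
      · rw [if_neg hadj]
        simp only [adjM, Matrix.of_apply]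
        split
        · next h => rw [hxdef]; simp [hx0 ω hω _ (hAdj h hadj)]
        · split
          · next h => rw [hxdef]; simp [hx0 ω hω _ (hAdj' h hadj)]
          · simp
    have hrow : ∀ i : Fin d, ∑ j, |adjM x i j| ≤ 6 * degmax * γ := by
      intro i
      have hdegi : (Finset.univ.filter fun j => (suppGraph βstar).Adj i j).card ≤ degmax := by
        rw [hdeg]
        have : Nat.card {j : Fin d // (suppGraph βstar).Adj i j} =
            (Finset.univ.filter fun j => (suppGraph βstar).Adj i j).card := by
          rw [Nat.card_eq_fintype_card, Fintype.card_subtype]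
        rw [← this]
        exact Finset.le_sup (f := fun i => Nat.card {j : Fin d // (suppGraph βstar).Adj i j})
          (Finset.mem_univ i)
      calc ∑ j, |adjM x i j|
          ≤ ∑ j, if (suppGraph βstar).Adj i j then 2 * γ else 0 :=
            Finset.sum_le_sum fun j _ => hent i j
        _ = ∑ _j ∈ Finset.univ.filter (fun j => (suppGraph βstar).Adj i j), 2 * γ :=
            (Finset.sum_filter _ _).symm
        _ = ((Finset.univ.filter fun j => (suppGraph βstar).Adj i j).card : ℝ) * (2 * γ) := by
            rw [Finset.sum_const, nsmul_eq_mul]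
        _ ≤ (degmax : ℝ) * (2 * γ) := by
            have : ((Finset.univ.filter fun j => (suppGraph βstar).Adj i j).card : ℝ)
                ≤ (degmax : ℝ) := Nat.cast_le.mpr hdegi
            nlinarith [hγ.le]
        _ ≤ 6 * degmax * γ := by nlinarith [Nat.cast_nonneg (α := ℝ) degmax, hγ.le]
    exact ciSup_le hrow
  refine ⟨le_trans (measure_mono ?_) hprob, le_trans (measure_mono ?_) hprob⟩
  · intro ω hω
    simp only [Set.mem_setOf_eq] at hω
    intro hG
    exact absurd (hkey1 ω hG) (not_le.mpr hω)
  · intro ω hω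
    simp only [Set.mem_setOf_eq] at hω
    intro hG
    exact absurd (hkey2 ω hG) (not_le.mpr hω)


end FCLS
end
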